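/- Let ψ and ψ₀ be continuous and satisfy positive-definiteness, symmetry, the generalized triangle inequality, and generalized homogeneity, and suppose {x_t} is persistently exciting with respect to ψ. Then for every t ∈ ℕ, the objective V_t(θ) = Σ_{k=1}^t λ^{t−k} ψ(y_k − x_kᵀθ) + λ^t ψ₀(θ − θ̂₀) is coercive (continuous and V_t(θ) → ∞ as ‖θ‖ → ∞), and hence attains its minimum: argmin_θ V_t(θ) ≠ ∅. -/

import Mathlib

open Finset Filter

/-- A class-K∞ function: continuous on [0,∞), zero at zero, strictly increasing
on [0,∞), and tending to ∞ at ∞. -/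
def ClassKInf (f : ℝ → ℝ) : Prop :=
  ContinuousOn f (Set.Ici 0) ∧ f 0 = 0 ∧ StrictMonoOn f (Set.Ici 0) ∧
    Tendsto f atTop atTop

/-- Dot product on ℝⁿ. -/
def dot {n : ℕ} (x θ : Fin n → ℝ) : ℝ := ∑ i, x i * θ i

/-- `N` is a norm on ℝⁿ. -/
def IsNorm {n : ℕ} (N : (Fin n → ℝ) → ℝ) : Prop :=
  (∀ x, 0 ≤ N x) ∧ (∀ x, N x = 0 ↔ x = 0) ∧
    (∀ (a : ℝ) (x), N (a • x) = |a| * N x) ∧ (∀ x y, N (x + y) ≤ N x + N y)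

/-- the objective V_t is coercive and attains its minimum. -/
theorem stmt_10 {n : ℕ} (ψ : ℝ → ℝ) (ψ₀ : (Fin n → ℝ) → ℝ) (fψ fψ₀ : ℝ → ℝ)
    (hψc : Continuous ψ) (hψnn : ∀ e, 0 ≤ ψ e)
    (hψpd : ∀ e, ψ e = 0 ↔ e = 0) (hψsym : ∀ e, ψ (-e) = ψ e)
    (αψ : ℝ) (hαψ : 0 < αψ) (hψGTI : ∀ e e' : ℝ, αψ * ψ e - ψ e' ≤ ψ (e - e'))
    (hfψ : ClassKInf fψ)
    (hψGH : ∀ (e r : ℝ), r ≠ 0 → fψ (1 / |r|) * ψ (r * e) ≤ ψ e)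
    (hψ₀c : Continuous ψ₀) (hψ₀nn : ∀ θ, 0 ≤ ψ₀ θ)
    (hψ₀pd : ∀ θ, ψ₀ θ = 0 ↔ θ = 0) (hψ₀sym : ∀ θ, ψ₀ (-θ) = ψ₀ θ)
    (αψ₀ : ℝ) (hαψ₀ : 0 < αψ₀)
    (hψ₀GTI : ∀ θ θ' : Fin n → ℝ, αψ₀ * ψ₀ θ - ψ₀ θ' ≤ ψ₀ (θ - θ'))
    (hfψ₀ : ClassKInf fψ₀)
    (hψ₀GH : ∀ (θ : Fin n → ℝ) (r : ℝ), r ≠ 0 → fψ₀ (1 / |r|) * ψ₀ (r • θ) ≤ ψ₀ θ)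
    (x : ℕ → Fin n → ℝ) (y : ℕ → ℝ) (θ₀ : Fin n → ℝ)
    (N : (Fin n → ℝ) → ℝ) (hN : IsNorm N)
    (l : ℝ) (hl : l ∈ Set.Ioo (0 : ℝ) 1)
    (T : ℕ) (hT : 0 < T) (α β : ℝ → ℝ) (hα : ClassKInf α) (hβ : ClassKInf β)
    (hPE : ∀ (t : ℕ) (θ : Fin n → ℝ),
      α (N θ) ≤ ∑ k ∈ Finset.Icc (t + 1) (t + T), ψ (dot (x k) θ) ∧
      ∑ k ∈ Finset.Icc (t + 1) (t + T), ψ (dot (x k) θ) ≤ β (N θ))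
    (V : ℕ → (Fin n → ℝ) → ℝ)
    (hV : ∀ (t : ℕ) (θ : Fin n → ℝ),
      V t θ = ∑ k ∈ Finset.Icc 1 t, l ^ (t - k) * ψ (y k - dot (x k) θ) +
        l ^ t * ψ₀ (θ - θ₀)) :
    ∀ t : ℕ,
      Continuous (V t) ∧
      (∀ M : ℝ, ∃ R : ℝ, ∀ θ : Fin n → ℝ, R ≤ N θ → M ≤ V t θ) ∧
      ∃ θm : Fin n → ℝ, ∀ θ : Fin n → ℝ, V t θm ≤ V t θ := by

  obtain ⟨hNnn, hNzero, hNsmul, hNtri⟩ := hN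
  have hN0 : N 0 = 0 := (hNzero 0).mpr rfl
  -- N is dominated by the sup norm
  obtain ⟨C, hCpos, hC⟩ : ∃ C : ℝ, 0 < C ∧ ∀ θ : Fin n → ℝ, N θ ≤ C * ‖θ‖ := by
    have hsum : ∀ (s : Finset (Fin n)) (f : Fin n → Fin n → ℝ),
        N (∑ i ∈ s, f i) ≤ ∑ i ∈ s, N (f i) := by
      intro s f
      induction s using Finset.induction with
      | empty => simp [hN0]
      | insert a s h ih =>
        rw [Finset.sum_insert h, Finset.sum_insert h]
        exact le_trans (hNtri _ _) (by linarith)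
    have hsnn : 0 ≤ ∑ i : Fin n, N (Pi.single i 1) :=
      Finset.sum_nonneg fun i _ => hNnn _
    refine ⟨(∑ i : Fin n, N (Pi.single i 1)) + 1, by linarith, fun θ => ?_⟩
    have h1 : θ = ∑ i : Fin n, Pi.single i (θ i) := (Finset.univ_sum_single θ).symm
    calc N θ = N (∑ i : Fin n, Pi.single i (θ i)) := by rw [← h1]
      _ ≤ ∑ i : Fin n, N (Pi.single i (θ i)) := hsum _ _
      _ ≤ ∑ i : Fin n, ‖θ‖ * N (Pi.single i 1) := by
          refine Finset.sum_le_sum fun i _ => ?_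
          have h2 : Pi.single i (θ i) = θ i • (Pi.single i 1 : Fin n → ℝ) := by
            funext j
            by_cases h : j = i
            · subst h; simp
            · simp [Pi.single_eq_of_ne h]
          rw [h2, hNsmul]
          have h3 : |θ i| ≤ ‖θ‖ := norm_le_pi_norm θ i
          exact mul_le_mul_of_nonneg_right h3 (hNnn _)
      _ = ‖θ‖ * ∑ i : Fin n, N (Pi.single i 1) := by rw [Finset.mul_sum]
      _ ≤ ((∑ i : Fin n, N (Pi.single i 1)) + 1) * ‖θ‖ := by
          rw [mul_comm]
          exact mul_le_mul_of_nonneg_right (by linarith) (norm_nonneg θ)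
  -- ψ₀ is coercive w.r.t. the sup norm
  have hcoe : ∀ M : ℝ, ∃ R : ℝ, 0 < R ∧ ∀ θ : Fin n → ℝ, R ≤ ‖θ‖ → M ≤ ψ₀ θ := by
    rcases Nat.eq_zero_or_pos n with hn | hn
    · intro M
      refine ⟨1, one_pos, fun θ hθ => ?_⟩
      exfalso
      subst hn
      have hθ0 : θ = 0 := funext fun i => i.elim0
      rw [hθ0, norm_zero] at hθ
      linarith
    · haveI : Nonempty (Fin n) := ⟨⟨0, hn⟩⟩
      have hsph : IsCompact (Metric.sphere (0 : Fin n → ℝ) 1) := isCompact_sphere 0 1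
      have hne : (Metric.sphere (0 : Fin n → ℝ) 1).Nonempty := by
        refine ⟨fun _ => 1, ?_⟩
        simp [Metric.mem_sphere, dist_zero_right, pi_norm_const]
      obtain ⟨u, hu, humin'⟩ := hsph.exists_isMinOn hne hψ₀c.continuousOn
      have humin : ∀ v ∈ Metric.sphere (0 : Fin n → ℝ) 1, ψ₀ u ≤ ψ₀ v := fun v hv => humin' hv
      have hu1 : ‖u‖ = 1 := by simpa [Metric.mem_sphere, dist_zero_right] using hu
      have hune : u ≠ 0 := fun h => by rw [h, norm_zero] at hu1; linarith
      have hm : 0 < ψ₀ u := lt_of_le_of_ne (hψ₀nn u) fun h => hune ((hψ₀pd u).mp h.symm)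
      intro M
      obtain ⟨R₀, hR₀⟩ := (Filter.eventually_atTop).mp
        (hfψ₀.2.2.2.eventually_ge_atTop (M / ψ₀ u))
      refine ⟨max R₀ 1, lt_of_lt_of_le one_pos (le_max_right _ _), fun θ hθ => ?_⟩
      have hθ1 : (1 : ℝ) ≤ ‖θ‖ := le_trans (le_max_right _ _) hθ
      have hθpos : (0 : ℝ) < ‖θ‖ := lt_of_lt_of_le one_pos hθ1
      have hθne : θ ≠ 0 := fun h => by rw [h, norm_zero] at hθpos; linarith
      set r : ℝ := 1 / ‖θ‖ with hr
      have hrne : r ≠ 0 := by positivity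
      have habs : 1 / |r| = ‖θ‖ := by
        rw [hr, abs_of_pos (by positivity)]
        field_simp
      have hGH := hψ₀GH θ r hrne
      rw [habs] at hGH
      have hsphmem : r • θ ∈ Metric.sphere (0 : Fin n → ℝ) 1 := by
        simp only [Metric.mem_sphere, dist_zero_right, norm_smul]
        rw [hr]
        rw [Real.norm_eq_abs, abs_of_pos (by positivity)]
        field_simp
      have hmem : ψ₀ u ≤ ψ₀ (r • θ) := humin _ hsphmem
      have hf1 : M / ψ₀ u ≤ fψ₀ ‖θ‖ := hR₀ ‖θ‖ (le_trans (le_max_left _ _) hθ)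
      have hf0 : 0 ≤ fψ₀ ‖θ‖ := by
        rcases eq_or_lt_of_le (le_of_lt hθpos) with h | h
        · rw [← h, hfψ₀.2.1]
        · exact le_of_lt (by rw [← hfψ₀.2.1]; exact hfψ₀.2.2.1 (Set.mem_Ici.mpr le_rfl) (Set.mem_Ici.mpr (le_of_lt hθpos)) h)
      have hMd : M / ψ₀ u * ψ₀ u = M := div_mul_cancel₀ M (ne_of_gt hm)
      nlinarith [mul_le_mul hf1 hmem (le_of_lt hm) hf0]
  intro t
  -- continuity
  have hdotc : ∀ k, Continuous fun θ : Fin n → ℝ => dot (x k) θ := by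
    intro k
    unfold dot
    exact continuous_finset_sum _ fun i _ => continuous_const.mul (continuous_apply i)
  have hVeq : V t = fun θ => ∑ k ∈ Finset.Icc 1 t, l ^ (t - k) * ψ (y k - dot (x k) θ) +
      l ^ t * ψ₀ (θ - θ₀) := funext (hV t)
  have hVc : Continuous (V t) := by
    rw [hVeq]
    refine Continuous.add ?_ ?_
    · exact continuous_finset_sum _ fun k _ =>
        continuous_const.mul (hψc.comp (continuous_const.sub (hdotc k)))
    · exact continuous_const.mul (hψ₀c.comp (continuous_id.sub continuous_const))
  have hlt : 0 < l ^ t := pow_pos hl.1 t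
  -- lower bound
  have hlow : ∀ θ, l ^ t * ψ₀ (θ - θ₀) ≤ V t θ := by
    intro θ
    rw [hV]
    have : 0 ≤ ∑ k ∈ Finset.Icc 1 t, l ^ (t - k) * ψ (y k - dot (x k) θ) :=
      Finset.sum_nonneg fun k _ => mul_nonneg (pow_nonneg (le_of_lt hl.1) _) (hψnn _)
    linarith
  -- coercivity w.r.t. sup norm
  have hcoeV : ∀ M : ℝ, ∃ R : ℝ, 0 < R ∧ ∀ θ : Fin n → ℝ, R ≤ ‖θ‖ → M ≤ V t θ := by
    intro M
    obtain ⟨R', hR'pos, hR'⟩ := hcoe (M / l ^ t)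
    refine ⟨R' + ‖θ₀‖, by positivity, fun θ hθ => ?_⟩
    have h1 : R' ≤ ‖θ - θ₀‖ := by
      have := norm_sub_norm_le θ θ₀
      linarith
    have h2 : M / l ^ t ≤ ψ₀ (θ - θ₀) := hR' _ h1
    have h3 := hlow θ
    have h4 : l ^ t * (M / l ^ t) ≤ l ^ t * ψ₀ (θ - θ₀) :=
      mul_le_mul_of_nonneg_left h2 (le_of_lt hlt)
    rw [mul_div_cancel₀ M (ne_of_gt hlt)] at h4
    linarith
  refine ⟨hVc, ?_, ?_⟩
  · -- coercivity w.r.t. N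
    intro M
    obtain ⟨R', hR'pos, hR'⟩ := hcoeV M
    refine ⟨C * R', fun θ hθ => ?_⟩
    refine hR' θ ?_
    have := hC θ
    have : C * R' ≤ C * ‖θ‖ := le_trans hθ this
    exact le_of_mul_le_mul_left this hCpos
  · -- minimum attained
    have hten : Tendsto (V t) (cocompact (Fin n → ℝ)) atTop := by
      rw [tendsto_atTop]
      intro b
      obtain ⟨R, hRpos, hR⟩ := hcoeV b
      have hnorm : Tendsto (fun θ : Fin n → ℝ => ‖θ‖) (cocompact _) atTop :=
        tendsto_norm_cocompact_atTop
      filter_upwards [hnorm.eventually (eventually_ge_atTop R)] with θ hθ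
      exact hR θ hθ
    exact hVc.exists_forall_le hten
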